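/- Let S ⊆ [m] × [n] be a nonempty finite set, and define the 3-way index set S' ⊆ ({1,2} × [m]) × ({1,2} × [n]) × S by S' = { ((ε,p), (ε,q), (p,q)) : ε ∈ {1,2}, (p,q) ∈ S }. Then there exist j ∈ {1,2,3} and a proper j-coordinate split (a,ب) of {1,2,3} such that S' is a coordinate toric fiber product along coordinate j with respect to that split if and only if either the map (p,q) ↦ p is injective on S or the map (p,q) ↦ q is injective on S (equivalently, the bipartite graph G_S is a disjoint union of stars whose central vertices all correspond to the same one of the two variables). -/

import Mathlib

/-- For a `3`-way index set with coordinates indexed by `Fin 3`, the tuples `s` and `t` agree on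
all coordinates in `a`. -/
def agreeOn {α β γ : Type*} (a : Finset (Fin 3)) (s t : α × β × γ) : Prop :=
  ((0 : Fin 3) ∈ a → s.1 = t.1) ∧ ((1 : Fin 3) ∈ a → s.2.1 = t.2.1) ∧
    ((2 : Fin 3) ∈ a → s.2.2 = t.2.2)

/-- A `3`-way index set `T` is a *coordinate toric fiber product* with respect to the coordinate
sets `(a, b)` if `T = { s | π_a(s) ∈ π_a(T) and π_b(s) ∈ π_b(T) }`. -/
def IsCTFP3 {α β γ : Type*} (T : Finset (α × β × γ)) (a b : Finset (Fin 3)) : Prop :=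
  ∀ s : α × β × γ, s ∈ T ↔ ((∃ t ∈ T, agreeOn a s t) ∧ (∃ u ∈ T, agreeOn b s u))

/-- The `3`-way index set of the (modified) Lawrence lift of `S ⊆ [m] × [n]`:
`S' = { ((ε,p), (ε,q), (p,q)) : ε ∈ {1,2}, (p,q) ∈ S }`. -/
def lawrenceLift {m n : ℕ} (S : Finset (Fin m × Fin n)) :
    Finset ((Fin 2 × Fin m) × (Fin 2 × Fin n) × {p : Fin m × Fin n // p ∈ S}) :=
  Finset.univ.image fun e : Fin 2 × {p : Fin m × Fin n // p ∈ S} =>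
    ((e.1, e.2.1.1), (e.1, e.2.1.2), e.2)

lemma mem_ll {m n : ℕ} {S : Finset (Fin m × Fin n)}
    (s : (Fin 2 × Fin m) × (Fin 2 × Fin n) × {p : Fin m × Fin n // p ∈ S}) :
    s ∈ lawrenceLift S ↔
      s.1.1 = s.2.1.1 ∧ s.1.2 = s.2.2.val.1 ∧ s.2.1.2 = s.2.2.val.2 := by
  obtain ⟨⟨x1, x2⟩, ⟨y1, y2⟩, z⟩ := s
  simp only [lawrenceLift, Finset.mem_image, Finset.mem_univ, true_and]
  constructor
  · rintro ⟨⟨ε, w⟩, h⟩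
    obtain ⟨h1, h2⟩ := Prod.mk.injEq .. ▸ h
    simp only [Prod.mk.injEq] at h
    obtain ⟨⟨ha, hb⟩, ⟨hc, hd⟩, he⟩ := h
    subst ha hb hc hd he
    exact ⟨rfl, rfl, rfl⟩
  · rintro ⟨h1, h2, h3⟩
    exact ⟨⟨x1, z⟩, by simp [Prod.ext_iff, h1, h2, h3]⟩

/-- If a cTFP-style condition holds with `2 ∉ c` and `1 ∉ d`, then `fst` is injective on `S`. -/
lemma fwd_fst {m n : ℕ} {S : Finset (Fin m × Fin n)} {c d : Finset (Fin 3)}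
    (h : ∀ s, s ∈ lawrenceLift S ↔
      ((∃ t ∈ lawrenceLift S, agreeOn c s t) ∧ (∃ u ∈ lawrenceLift S, agreeOn d s u)))
    (h2c : (2 : Fin 3) ∉ c) (h1d : (1 : Fin 3) ∉ d) :
    Set.InjOn (Prod.fst : Fin m × Fin n → Fin m) (S : Set (Fin m × Fin n)) := by
  rintro ⟨p, q⟩ hpq ⟨p', q'⟩ hpq' hpp'
  simp only [Finset.mem_coe] at hpq hpq'
  dsimp at hpp'
  subst hpp'
  have hs : ((0, p), (0, q'), ⟨(p, q), hpq⟩) ∈ lawrenceLift S := by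
    refine (h _).mpr ⟨⟨((0, p), (0, q'), ⟨(p, q'), hpq'⟩), (mem_ll _).mpr ⟨rfl, rfl, rfl⟩,
      fun _ => rfl, fun _ => rfl, fun h2 => absurd h2 h2c⟩,
      ⟨((0, p), (0, q), ⟨(p, q), hpq⟩), (mem_ll _).mpr ⟨rfl, rfl, rfl⟩,
      fun _ => rfl, fun h1 => absurd h1 h1d, fun _ => rfl⟩⟩
  have := ((mem_ll _).mp hs).2.2
  simp only [Prod.mk.injEq, true_and]
  exact this.symm

lemma fwd_snd {m n : ℕ} {S : Finset (Fin m × Fin n)} {c d : Finset (Fin 3)}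
    (h : ∀ s, s ∈ lawrenceLift S ↔
      ((∃ t ∈ lawrenceLift S, agreeOn c s t) ∧ (∃ u ∈ lawrenceLift S, agreeOn d s u)))
    (h2c : (2 : Fin 3) ∉ c) (h0d : (0 : Fin 3) ∉ d) :
    Set.InjOn (Prod.snd : Fin m × Fin n → Fin n) (S : Set (Fin m × Fin n)) := by
  rintro ⟨p, q⟩ hpq ⟨p', q'⟩ hpq' hqq'
  simp only [Finset.mem_coe] at hpq hpq'
  dsimp at hqq'
  subst hqq'
  have hs : ((0, p'), (0, q), ⟨(p, q), hpq⟩) ∈ lawrenceLift S := by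
    refine (h _).mpr ⟨⟨((0, p'), (0, q), ⟨(p', q), hpq'⟩), (mem_ll _).mpr ⟨rfl, rfl, rfl⟩,
      fun _ => rfl, fun _ => rfl, fun h2 => absurd h2 h2c⟩,
      ⟨((0, p), (0, q), ⟨(p, q), hpq⟩), (mem_ll _).mpr ⟨rfl, rfl, rfl⟩,
      fun h0 => absurd h0 h0d, fun _ => rfl, fun _ => rfl⟩⟩
  have := ((mem_ll _).mp hs).2.1
  simp only [Prod.mk.injEq, and_true]
  exact this.symm

lemma fwd_absurd {m n : ℕ} {S : Finset (Fin m × Fin n)} (hS : S.Nonempty) {c d : Finset (Fin 3)}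
    (h : ∀ s, s ∈ lawrenceLift S ↔
      ((∃ t ∈ lawrenceLift S, agreeOn c s t) ∧ (∃ u ∈ lawrenceLift S, agreeOn d s u)))
    (h1c : (1 : Fin 3) ∉ c) (h0d : (0 : Fin 3) ∉ d) : False := by
  obtain ⟨⟨p, q⟩, hpq⟩ := hS
  have hs : ((0, p), (1, q), ⟨(p, q), hpq⟩) ∈ lawrenceLift S := by
    refine (h _).mpr ⟨⟨((0, p), (0, q), ⟨(p, q), hpq⟩), (mem_ll _).mpr ⟨rfl, rfl, rfl⟩,
      fun _ => rfl, fun h1 => absurd h1 h1c, fun _ => rfl⟩,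
      ⟨((1, p), (1, q), ⟨(p, q), hpq⟩), (mem_ll _).mpr ⟨rfl, rfl, rfl⟩,
      fun h0 => absurd h0 h0d, fun _ => rfl, fun _ => rfl⟩⟩
  have := ((mem_ll _).mp hs).1
  simp at this

lemma agreeOn_refl {α β γ : Type*} (a : Finset (Fin 3)) (s : α × β × γ) : agreeOn a s s :=
  ⟨fun _ => rfl, fun _ => rfl, fun _ => rfl⟩

lemma bwd_fst {m n : ℕ} {S : Finset (Fin m × Fin n)}
    (hf : Set.InjOn (Prod.fst : Fin m × Fin n → Fin m) (S : Set (Fin m × Fin n))) :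
    IsCTFP3 (lawrenceLift S) {0, 1} {0, 2} := by
  intro s
  constructor
  · intro hs
    exact ⟨⟨s, hs, agreeOn_refl _ _⟩, ⟨s, hs, agreeOn_refl _ _⟩⟩
  · rintro ⟨⟨t, ht, at0, at1, -⟩, ⟨u, hu, au0, -, au2⟩⟩
    have e1 : s.1 = t.1 := at0 (by decide)
    have e2 : s.2.1 = t.2.1 := at1 (by decide)
    have e3 : s.1 = u.1 := au0 (by decide)
    have e4 : s.2.2 = u.2.2 := au2 (by decide)
    obtain ⟨ht1, ht2, ht3⟩ := (mem_ll t).mp ht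
    obtain ⟨hu1, hu2, hu3⟩ := (mem_ll u).mp hu
    refine (mem_ll s).mpr ⟨by rw [e1, e2, ht1], by rw [e3, e4, hu2], ?_⟩
    have hz : t.2.2.val = s.2.2.val := by
      refine hf (Finset.mem_coe.mpr t.2.2.2) (Finset.mem_coe.mpr s.2.2.2) ?_
      have : s.2.2.val.1 = s.1.2 := by rw [e3, hu2, e4]
      rw [this, e1, ht2]
    rw [e2, ht3, hz]

lemma bwd_snd {m n : ℕ} {S : Finset (Fin m × Fin n)}
    (hf : Set.InjOn (Prod.snd : Fin m × Fin n → Fin n) (S : Set (Fin m × Fin n))) :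
    IsCTFP3 (lawrenceLift S) {0, 1} {1, 2} := by
  intro s
  constructor
  · intro hs
    exact ⟨⟨s, hs, agreeOn_refl _ _⟩, ⟨s, hs, agreeOn_refl _ _⟩⟩
  · rintro ⟨⟨u, hu, au0, au1, -⟩, ⟨t, ht, -, at1, at2⟩⟩
    have e1 : s.1 = u.1 := au0 (by decide)
    have e2 : s.2.1 = u.2.1 := au1 (by decide)
    have e3 : s.2.1 = t.2.1 := at1 (by decide)
    have e4 : s.2.2 = t.2.2 := at2 (by decide)
    obtain ⟨hu1, hu2, hu3⟩ := (mem_ll u).mp hu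
    obtain ⟨ht1, ht2, ht3⟩ := (mem_ll t).mp ht
    refine (mem_ll s).mpr ⟨by rw [e1, e2, hu1], ?_, by rw [e3, e4, ht3]⟩
    have hz : u.2.2.val = s.2.2.val := by
      refine hf (Finset.mem_coe.mpr u.2.2.2) (Finset.mem_coe.mpr s.2.2.2) ?_
      have : s.2.2.val.2 = s.2.1.2 := by rw [e4, ← ht3, ← e3]
      rw [this, e2, hu3]
    rw [e1, hu2, hz]


lemma third01 {a : Finset (Fin 3)} {x : Fin 3} (hx : x ∈ a) (h0 : x ≠ 0) (h1 : x ≠ 1) :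
    (2 : Fin 3) ∈ a := by
  have : x = 2 := by omega
  exact this ▸ hx

lemma third02 {a : Finset (Fin 3)} {x : Fin 3} (hx : x ∈ a) (h0 : x ≠ 0) (h2 : x ≠ 2) :
    (1 : Fin 3) ∈ a := by
  have : x = 1 := by omega
  exact this ▸ hx

lemma third12 {a : Finset (Fin 3)} {x : Fin 3} (hx : x ∈ a) (h1 : x ≠ 1) (h2 : x ≠ 2) :
    (0 : Fin 3) ∈ a := by
  have : x = 0 := by omega
  exact this ▸ hx

/-- There exist `j ∈ {1,2,3}` and a proper `j`-coordinate split `(a, b)` such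
that the Lawrence lift index set `S'` is a cTFP along coordinate `j` with respect to `(a, b)`
if and only if the map `(p,q) ↦ p` is injective on `S` or the map `(p,q) ↦ q` is injective on
`S` (equivalently, `G_S` is a disjoint union of stars whose central vertices all correspond to
the same variable). -/
theorem stmt9 {m n : ℕ} (S : Finset (Fin m × Fin n)) (hS : S.Nonempty) :
    (∃ (j : Fin 3) (a : Finset (Fin 3)), {j} ⊂ a ∧ a ⊂ Finset.univ ∧
        IsCTFP3 (lawrenceLift S) a ((Finset.univ \ a) ∪ {j})) ↔
      (Set.InjOn (Prod.fst : Fin m × Fin n → Fin m) (S : Set (Fin m × Fin n)) ∨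
        Set.InjOn (Prod.snd : Fin m × Fin n → Fin n) (S : Set (Fin m × Fin n))) := by

  constructor
  · rintro ⟨j, a, hja, hau, h⟩
    have haj : j ∈ a := hja.subset (Finset.mem_singleton_self j)
    obtain ⟨y, -, hy⟩ := Finset.exists_of_ssubset hau
    obtain ⟨x, hx, hxj⟩ := Finset.exists_of_ssubset hja
    rw [Finset.mem_singleton] at hxj
    have hxy : x ≠ y := fun e => hy (e ▸ hx)
    have hb : ∀ i : Fin 3, i ∈ (Finset.univ \ a) ∪ {j} ↔ (i ∉ a ∨ i = j) := by
      intro i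
      simp [Finset.mem_union, Finset.mem_sdiff, Finset.mem_singleton]
      exact or_comm
    fin_cases j <;> fin_cases y
    · exact absurd haj hy
    · -- j = 0, y = 1 : a = {0,2}, b = {0,1}; fst injective (c = b, d = a)
      have h2a : (2 : Fin 3) ∈ a := third01 hx hxj hxy
      refine Or.inl (fwd_fst (fun s => (h s).trans and_comm) ?_ hy)
      intro hmem
      rcases (hb 2).mp hmem with h' | h'
      · exact h' h2a
      · exact absurd h' (by decide)
    · -- j = 0, y = 2 : a = {0,1}, b = {0,2}; fst injective (c = a, d = b)
      have h1a : (1 : Fin 3) ∈ a := third02 hx hxj hxy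
      refine Or.inl (fwd_fst h hy ?_)
      intro hmem
      rcases (hb 1).mp hmem with h' | h'
      · exact h' h1a
      · exact absurd h' (by decide)
    · -- j = 1, y = 0 : a = {1,2}, b = {0,1}; snd injective (c = b, d = a)
      have h2a : (2 : Fin 3) ∈ a := third01 hx hxy hxj
      refine Or.inr (fwd_snd (fun s => (h s).trans and_comm) ?_ hy)
      intro hmem
      rcases (hb 2).mp hmem with h' | h'
      · exact h' h2a
      · exact absurd h' (by decide)
    · exact absurd haj hy
    · -- j = 1, y = 2 : a = {0,1}, b = {1,2}; snd injective (c = a, d = b)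
      have h0a : (0 : Fin 3) ∈ a := third12 hx hxj hxy
      refine Or.inr (fwd_snd h hy ?_)
      intro hmem
      rcases (hb 0).mp hmem with h' | h'
      · exact h' h0a
      · exact absurd h' (by decide)
    · -- j = 2, y = 0 : a = {1,2}, b = {0,2}; absurd (c = b, d = a)
      have h1a : (1 : Fin 3) ∈ a := third02 hx hxy hxj
      exact absurd (fwd_absurd hS (fun s => (h s).trans and_comm)
        (fun hmem => by
          rcases (hb 1).mp hmem with h' | h'
          · exact h' h1a
          · exact absurd h' (by decide)) hy) id
    · -- j = 2, y = 1 : a = {0,2}, b = {1,2}; absurd (c = a, d = b)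
      have h0a : (0 : Fin 3) ∈ a := third12 hx hxy hxj
      exact absurd (fwd_absurd hS h hy
        (fun hmem => by
          rcases (hb 0).mp hmem with h' | h'
          · exact h' h0a
          · exact absurd h' (by decide))) id
    · exact absurd haj hy
  · rintro (hf | hf)
    · refine ⟨0, {0, 1}, by decide, by decide, ?_⟩
      have : ((Finset.univ \ {0, 1}) ∪ {0} : Finset (Fin 3)) = {0, 2} := by decide
      rw [this]
      exact bwd_fst hf
    · refine ⟨1, {0, 1}, by decide, by decide, ?_⟩
      have : ((Finset.univ \ {0, 1}) ∪ {1} : Finset (Fin 3)) = {1, 2} := by decide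
      rw [this]
      exact bwd_snd hf
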